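/- For probability measures μ, ν on ℝ with finite second moments, the squared 2-Wasserstein distance equals the integral over τ ∈ (0,1) of |F_μ^{-1}(τ) - F_ν^{-1}(τ)|², where F_μ^{-1}, F_ν^{-1} are the quantile functions (generalized inverses of the cumulative distribution functions) of μ and ν. -/

import Mathlib

open MeasureTheory Set

/-- Squared 2-Wasserstein distance, defined as the infimum over couplings of the
integral of the squared distance. -/
noncomputable def W2sq {α : Type*} [MeasurableSpace α] [PseudoMetricSpace α]
    (μ ν : Measure α) : ℝ :=
  sInf { c | ∃ γ : Measure (α × α), γ.map Prod.fst = μ ∧ γ.map Prod.snd = ν ∧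
      c = ∫ p, dist p.1 p.2 ^ 2 ∂γ }

/-- Cumulative distribution function. -/
noncomputable def cdf (μ : Measure ℝ) (x : ℝ) : ℝ := (μ (Iic x)).toReal

/-- Quantile function (generalized inverse of the CDF). -/
noncomputable def quantile (μ : Measure ℝ) (τ : ℝ) : ℝ := sInf { x | τ ≤ cdf μ x }


open Filter Topology

section Quantile
variable (μ : Measure ℝ) [IsProbabilityMeasure μ]

lemma cdf_eq (x : ℝ) : cdf μ x = ProbabilityTheory.cdf μ x :=
  (ProbabilityTheory.cdf_eq_real μ x).symm

lemma quantile_set_nonempty {τ : ℝ} (h1 : τ < 1) : { x | τ ≤ cdf μ x }.Nonempty := by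
  obtain ⟨x, hx⟩ := ((ProbabilityTheory.tendsto_cdf_atTop μ).eventually
    (eventually_ge_nhds h1)).exists
  exact ⟨x, by simpa [cdf_eq] using hx⟩

lemma quantile_set_bddBelow {τ : ℝ} (h0 : 0 < τ) : BddBelow { x | τ ≤ cdf μ x } := by
  obtain ⟨y, hy⟩ := ((ProbabilityTheory.tendsto_cdf_atBot μ).eventually
    (eventually_lt_nhds h0)).exists
  refine ⟨y, fun z hz => ?_⟩
  by_contra h
  push_neg at h
  have : cdf μ z ≤ cdf μ y := by
    simp only [cdf_eq]; exact ProbabilityTheory.monotone_cdf μ h.le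
  have hzz : τ ≤ cdf μ z := hz
  simp only [cdf_eq] at hzz this
  exact absurd (le_trans hzz this) (not_le.2 hy)

lemma le_cdf_quantile {τ : ℝ} (h0 : 0 < τ) (h1 : τ < 1) : τ ≤ cdf μ (quantile μ τ) := by
  set F := ProbabilityTheory.cdf μ
  have key : ∀ x ∈ Ioi (quantile μ τ), τ ≤ F x := by
    intro x hx
    obtain ⟨z, hz, hzx⟩ := (csInf_lt_iff (quantile_set_bddBelow μ h0)
      (quantile_set_nonempty μ h1)).1 hx
    calc τ ≤ cdf μ z := hz
    _ = F z := cdf_eq μ z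
    _ ≤ F x := ProbabilityTheory.monotone_cdf μ hzx.le
  rw [cdf_eq]
  have hc : Tendsto F (𝓝[>] (quantile μ τ)) (𝓝 (F (quantile μ τ))) :=
    ((ProbabilityTheory.cdf μ).right_continuous (quantile μ τ)).tendsto.mono_left
      (nhdsWithin_mono _ Ioi_subset_Ici_self)
  exact ge_of_tendsto hc (eventually_nhdsWithin_of_forall key)

lemma quantile_le_iff {τ x : ℝ} (h0 : 0 < τ) (h1 : τ < 1) :
    quantile μ τ ≤ x ↔ τ ≤ cdf μ x := by
  constructor
  · intro h
    calc τ ≤ cdf μ (quantile μ τ) := le_cdf_quantile μ h0 h1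
    _ ≤ cdf μ x := by simp only [cdf_eq]; exact ProbabilityTheory.monotone_cdf μ h
  · intro h
    exact csInf_le (quantile_set_bddBelow μ h0) h

lemma monotoneOn_quantile : MonotoneOn (quantile μ) (Ioo 0 1) := by
  intro a ha b hb hab
  exact le_csInf (quantile_set_nonempty μ hb.2) fun x hx =>
    csInf_le (quantile_set_bddBelow μ ha.1) (le_trans hab hx)

lemma aemeasurable_quantile : AEMeasurable (quantile μ) (volume.restrict (Ioo 0 1)) :=
  aemeasurable_restrict_of_monotoneOn measurableSet_Ioo (monotoneOn_quantile μ)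

lemma map_quantile : (volume.restrict (Ioo (0:ℝ) 1)).map (quantile μ) = μ := by
  have hprob : IsProbabilityMeasure (volume.restrict (Ioo (0:ℝ) 1)) := by
    constructor; simp
  refine Measure.ext_of_Iic _ _ (fun x => ?_)
  rw [Measure.map_apply_of_aemeasurable (aemeasurable_quantile μ) measurableSet_Iic]
  have hFx0 : 0 ≤ cdf μ x := ENNReal.toReal_nonneg
  have hFx1 : cdf μ x ≤ 1 := by
    rw [cdf_eq]; exact ProbabilityTheory.cdf_le_one μ x
  have hset : Ioo (0:ℝ) 1 ∩ (quantile μ ⁻¹' Iic x) = Ioc 0 (cdf μ x) ∩ Ioo 0 1 := by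
    ext τ
    simp only [mem_inter_iff, mem_Ioo, mem_preimage, mem_Iic, mem_Ioc]
    constructor
    · rintro ⟨⟨h0, h1⟩, hq⟩
      exact ⟨⟨h0, (quantile_le_iff μ h0 h1).1 hq⟩, h0, h1⟩
    · rintro ⟨⟨h0, hτ⟩, _, h1⟩
      exact ⟨⟨h0, h1⟩, (quantile_le_iff μ h0 h1).2 hτ⟩
  rw [Measure.restrict_apply' measurableSet_Ioo, inter_comm (quantile μ ⁻¹' Iic x), hset]
  have : volume (Ioc 0 (cdf μ x) ∩ Ioo 0 1) = ENNReal.ofReal (cdf μ x) := by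
    rcases eq_or_lt_of_le hFx1 with h | h
    · rw [h]
      have : Ioc (0:ℝ) 1 ∩ Ioo 0 1 = Ioo 0 1 := by
        rw [inter_eq_right]; exact Ioo_subset_Ioc_self
      simp [this]
    · have : Ioc (0:ℝ) (cdf μ x) ∩ Ioo 0 1 = Ioc 0 (cdf μ x) := by
        rw [inter_eq_left]
        intro t ht
        exact ⟨ht.1, lt_of_le_of_lt ht.2 h⟩
      rw [this]; simp [hFx0]
  rw [this, cdf]
  exact ENNReal.ofReal_toReal (measure_ne_top μ _)

end Quantile


open MeasureTheory Set Filter Topology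

/-- The elementary function with `∫ s, phi x s = x`. -/
noncomputable def phi (x s : ℝ) : ℝ := (if s < x then 1 else 0) - (if s < 0 then 1 else 0)

lemma phi_eq_indicator (x : ℝ) :
    phi x = fun s => Set.indicator (Ico 0 x) (fun _ => (1:ℝ)) s
      - Set.indicator (Ico x 0) (fun _ => (1:ℝ)) s := by
  funext s
  simp only [phi, Set.indicator, mem_Ico]
  rcases lt_or_ge s 0 with h2 | h2 <;> rcases lt_or_ge s x with h1 | h1
  · simp [h1, h2, not_le.mpr h1, not_le.mpr h2]
  · simp [not_lt.mpr h1, h2, h1, not_le.mpr h2]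
  · simp [h1, not_lt.mpr h2, h2, not_le.mpr h1]
  · simp [not_lt.mpr h1, not_lt.mpr h2, h1, h2]

lemma integrable_indicator_Ico (a b : ℝ) :
    Integrable ((Ico a b).indicator (fun _ => (1:ℝ))) := by
  rw [integrable_indicator_iff measurableSet_Ico]
  exact integrableOn_const measure_Ico_lt_top.ne

lemma integrable_phi (x : ℝ) : Integrable (phi x) := by
  rw [phi_eq_indicator]
  exact (integrable_indicator_Ico 0 x).sub (integrable_indicator_Ico x 0)

lemma integral_phi (x : ℝ) : ∫ s, phi x s = x := by
  rw [phi_eq_indicator,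
    integral_sub (integrable_indicator_Ico 0 x) (integrable_indicator_Ico x 0),
    integral_indicator_const _ measurableSet_Ico, integral_indicator_const _ measurableSet_Ico]
  simp only [measureReal_def, Real.volume_Ico, smul_eq_mul, mul_one]
  rcases le_or_gt 0 x with h | h
  · rw [ENNReal.toReal_ofReal (by linarith : (0:ℝ) ≤ x - 0),
      ENNReal.ofReal_of_nonpos (by linarith : (0:ℝ) - x ≤ 0)]
    simp
  · rw [ENNReal.ofReal_of_nonpos (by linarith : x - 0 ≤ 0),
      ENNReal.toReal_ofReal (by linarith : (0:ℝ) ≤ 0 - x)]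
    simp

lemma integral_abs_phi (x : ℝ) : ∫ s, |phi x s| = |x| := by
  rcases le_or_gt 0 x with h | h
  · have : ∀ s, |phi x s| = phi x s := by
      intro s; rw [abs_of_nonneg]; simp only [phi]; split_ifs <;> linarith
    simp only [this, integral_phi, abs_of_nonneg h]
  · have : ∀ s, |phi x s| = -phi x s := by
      intro s; rw [abs_of_nonpos]; simp only [phi]; split_ifs <;> linarith
    simp only [this, integral_neg, integral_phi, abs_of_neg h]

lemma measurable_phi2 : Measurable (fun z : ℝ × ℝ => phi z.1 z.2) := by
  unfold phi
  exact ((measurable_const.ite (measurableSet_lt measurable_snd measurable_fst)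
    measurable_const).sub
    (measurable_const.ite (measurableSet_lt measurable_snd measurable_const) measurable_const))

section Coupling

variable (μ ν : Measure ℝ) [IsProbabilityMeasure μ] [IsProbabilityMeasure ν]

/-- The comonotone coupling of `μ` and `ν`. -/
noncomputable def como : Measure (ℝ × ℝ) :=
  (volume.restrict (Ioo (0:ℝ) 1)).map (fun τ => (quantile μ τ, quantile ν τ))

lemma aem_pair : AEMeasurable (fun τ => (quantile μ τ, quantile ν τ))
    (volume.restrict (Ioo (0:ℝ) 1)) :=
  (aemeasurable_quantile μ).prodMk (aemeasurable_quantile ν)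

lemma como_fst : (como μ ν).map Prod.fst = μ := by
  rw [como, AEMeasurable.map_map_of_aemeasurable measurable_fst.aemeasurable (aem_pair μ ν)]
  exact map_quantile μ

lemma como_snd : (como μ ν).map Prod.snd = ν := by
  rw [como, AEMeasurable.map_map_of_aemeasurable measurable_snd.aemeasurable (aem_pair μ ν)]
  exact map_quantile ν

variable {γ : Measure (ℝ × ℝ)}

lemma coupling_prob (hγ1 : γ.map Prod.fst = μ) : IsProbabilityMeasure γ := by
  constructor
  have h : (γ.map Prod.fst) univ = 1 := by rw [hγ1]; exact measure_univ
  rwa [Measure.map_apply measurable_fst MeasurableSet.univ, preimage_univ] at h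

/-- Tail probability. -/
noncomputable def tail (μ : Measure ℝ) (s : ℝ) : ℝ := (μ (Ioi s)).toReal

lemma tail_eq_one_sub (s : ℝ) : tail μ s = 1 - cdf μ s := by
  have h : μ (Iic s) + μ (Ioi s) = 1 := by
    have := measure_add_measure_compl (μ := μ) (measurableSet_Iic (a := s))
    rwa [compl_Iic, measure_univ] at this
  have h2 := congrArg ENNReal.toReal h
  rw [ENNReal.toReal_add (measure_ne_top μ _) (measure_ne_top μ _)] at h2
  simp only [ENNReal.toReal_one] at h2
  unfold tail cdf
  linarith

lemma measurableSet_corner (s t : ℝ) : MeasurableSet {p : ℝ × ℝ | s < p.1 ∧ t < p.2} :=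
  (measurableSet_lt measurable_const measurable_fst).inter
    (measurableSet_lt measurable_const measurable_snd)

lemma coupling_fst_apply (hγ1 : γ.map Prod.fst = μ) (s : ℝ) :
    γ {p : ℝ × ℝ | s < p.1} = μ (Ioi s) := by
  rw [← hγ1, Measure.map_apply measurable_fst measurableSet_Ioi]; rfl

lemma coupling_snd_apply (hγ2 : γ.map Prod.snd = ν) (t : ℝ) :
    γ {p : ℝ × ℝ | t < p.2} = ν (Ioi t) := by
  rw [← hγ2, Measure.map_apply measurable_snd measurableSet_Ioi]; rfl

lemma coupling_J_le (hγ1 : γ.map Prod.fst = μ) (hγ2 : γ.map Prod.snd = ν) (s t : ℝ) :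
    (γ {p : ℝ × ℝ | s < p.1 ∧ t < p.2}).toReal ≤ min (tail μ s) (tail ν t) := by
  have : IsProbabilityMeasure γ := coupling_prob μ hγ1
  refine le_min ?_ ?_
  · refine ENNReal.toReal_mono (measure_ne_top μ _) ?_
    rw [← coupling_fst_apply μ hγ1 s]
    exact measure_mono (fun p hp => hp.1)
  · refine ENNReal.toReal_mono (measure_ne_top ν _) ?_
    rw [← coupling_snd_apply ν hγ2 t]
    exact measure_mono (fun p hp => hp.2)

lemma como_J (s t : ℝ) :
    ((como μ ν) {p : ℝ × ℝ | s < p.1 ∧ t < p.2}).toReal = min (tail μ s) (tail ν t) := by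
  have hc : 0 ≤ cdf μ s := ENNReal.toReal_nonneg
  have hd : 0 ≤ cdf ν t := ENNReal.toReal_nonneg
  have hc1 : cdf μ s ≤ 1 := by rw [cdf_eq]; exact ProbabilityTheory.cdf_le_one μ s
  have hd1 : cdf ν t ≤ 1 := by rw [cdf_eq]; exact ProbabilityTheory.cdf_le_one ν t
  rw [como, Measure.map_apply_of_aemeasurable (aem_pair μ ν) (measurableSet_corner s t),
    Measure.restrict_apply' measurableSet_Ioo]
  have hset : (fun τ => (quantile μ τ, quantile ν τ)) ⁻¹' {p : ℝ × ℝ | s < p.1 ∧ t < p.2}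
      ∩ Ioo 0 1 = Ioo (max (cdf μ s) (cdf ν t)) 1 := by
    ext τ
    simp only [mem_inter_iff, mem_preimage, mem_setOf_eq, mem_Ioo, max_lt_iff]
    constructor
    · rintro ⟨⟨hs, ht⟩, h0, h1⟩
      refine ⟨⟨?_, ?_⟩, h1⟩
      · by_contra h; push_neg at h
        exact absurd ((quantile_le_iff μ h0 h1).2 h) (not_le.2 hs)
      · by_contra h; push_neg at h
        exact absurd ((quantile_le_iff ν h0 h1).2 h) (not_le.2 ht)
    · rintro ⟨⟨hs, ht⟩, h1⟩
      have h0 : 0 < τ := lt_of_le_of_lt hc hs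
      refine ⟨⟨?_, ?_⟩, h0, h1⟩
      · by_contra h; push_neg at h
        exact absurd ((quantile_le_iff μ h0 h1).1 h) (not_le.2 hs)
      · by_contra h; push_neg at h
        exact absurd ((quantile_le_iff ν h0 h1).1 h) (not_le.2 ht)
  rw [hset, Real.volume_Ioo]
  rw [tail_eq_one_sub μ s, tail_eq_one_sub ν t]
  rcases le_total (cdf μ s) (cdf ν t) with h | h
  · rw [max_eq_right h, min_eq_right (by linarith)]
    rw [ENNReal.toReal_ofReal (by linarith)]
  · rw [max_eq_left h, min_eq_left (by linarith)]
    rw [ENNReal.toReal_ofReal (by linarith)]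

end Coupling

section Expand

noncomputable def ifneg (s : ℝ) : ℝ := if s < 0 then 1 else 0

lemma phi_mul_expand (s t : ℝ) (p : ℝ × ℝ) :
    phi p.1 s * phi p.2 t =
      ({q : ℝ × ℝ | s < q.1 ∧ t < q.2}).indicator (fun _ => (1:ℝ)) p
      - ifneg t * ({q : ℝ × ℝ | s < q.1}).indicator (fun _ => (1:ℝ)) p
      - ifneg s * ({q : ℝ × ℝ | t < q.2}).indicator (fun _ => (1:ℝ)) p
      + ifneg s * ifneg t := by
  simp only [phi, ifneg, Set.indicator, mem_setOf_eq]
  by_cases h1 : s < p.1 <;> by_cases h2 : t < p.2 <;>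
    simp [h1, h2] <;> split_ifs <;> ring

variable (μ ν : Measure ℝ) [IsProbabilityMeasure μ] [IsProbabilityMeasure ν]
variable {γ : Measure (ℝ × ℝ)}

lemma inner_eq (hγ1 : γ.map Prod.fst = μ) (hγ2 : γ.map Prod.snd = ν) (s t : ℝ) :
    ∫ p, phi p.1 s * phi p.2 t ∂γ =
      (γ {p : ℝ × ℝ | s < p.1 ∧ t < p.2}).toReal
      - ifneg t * tail μ s - ifneg s * tail ν t + ifneg s * ifneg t := by
  have : IsProbabilityMeasure γ := coupling_prob μ hγ1
  have hS : MeasurableSet {q : ℝ × ℝ | s < q.1 ∧ t < q.2} := measurableSet_corner s t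
  have hS1 : MeasurableSet {q : ℝ × ℝ | s < q.1} :=
    measurableSet_lt measurable_const measurable_fst
  have hS2 : MeasurableSet {q : ℝ × ℝ | t < q.2} :=
    measurableSet_lt measurable_const measurable_snd
  have i1 : Integrable ({q : ℝ × ℝ | s < q.1 ∧ t < q.2}.indicator fun _ => (1:ℝ)) γ :=
    (integrable_const (1:ℝ)).indicator hS
  have i2 : Integrable ({q : ℝ × ℝ | s < q.1}.indicator fun _ => (1:ℝ)) γ :=
    (integrable_const (1:ℝ)).indicator hS1
  have i3 : Integrable ({q : ℝ × ℝ | t < q.2}.indicator fun _ => (1:ℝ)) γ :=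
    (integrable_const (1:ℝ)).indicator hS2
  have i2' : Integrable (fun p : ℝ × ℝ => ifneg t * {q : ℝ × ℝ | s < q.1}.indicator (fun _ => (1:ℝ)) p) γ :=
    i2.const_mul _
  have i3' : Integrable (fun p : ℝ × ℝ => ifneg s * {q : ℝ × ℝ | t < q.2}.indicator (fun _ => (1:ℝ)) p) γ :=
    i3.const_mul _
  have i12 : Integrable (fun p : ℝ × ℝ => {q : ℝ × ℝ | s < q.1 ∧ t < q.2}.indicator (fun _ => (1:ℝ)) p
      - ifneg t * {q : ℝ × ℝ | s < q.1}.indicator (fun _ => (1:ℝ)) p) γ := i1.sub i2'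
  have i123 : Integrable (fun p : ℝ × ℝ => {q : ℝ × ℝ | s < q.1 ∧ t < q.2}.indicator (fun _ => (1:ℝ)) p
      - ifneg t * {q : ℝ × ℝ | s < q.1}.indicator (fun _ => (1:ℝ)) p
      - ifneg s * {q : ℝ × ℝ | t < q.2}.indicator (fun _ => (1:ℝ)) p) γ := i12.sub i3'
  simp only [phi_mul_expand s t]
  rw [integral_add i123 (integrable_const _),
    integral_sub i12 i3',
    integral_sub i1 i2', integral_const_mul, integral_const_mul,
    integral_indicator_const _ hS, integral_indicator_const _ hS1,
    integral_indicator_const _ hS2, integral_const]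
  have hu : (γ univ).toReal = 1 := by simp
  simp only [measureReal_def]
  rw [coupling_fst_apply μ hγ1, coupling_snd_apply ν hγ2, hu]
  simp only [smul_eq_mul, mul_one, one_smul]
  unfold tail
  ring

lemma inner_le (hγ1 : γ.map Prod.fst = μ) (hγ2 : γ.map Prod.snd = ν) (s t : ℝ) :
    ∫ p, phi p.1 s * phi p.2 t ∂γ ≤ ∫ p, phi p.1 s * phi p.2 t ∂(como μ ν) := by
  rw [inner_eq μ ν hγ1 hγ2 s t, inner_eq μ ν (como_fst μ ν) (como_snd μ ν) s t]
  have h := coupling_J_le μ ν hγ1 hγ2 s t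
  rw [como_J μ ν s t]
  linarith

end Expand

section Fubini

variable (μ ν : Measure ℝ) [IsProbabilityMeasure μ] [IsProbabilityMeasure ν]
variable {γ : Measure (ℝ × ℝ)}

lemma integrable_sq_fst (hγ1 : γ.map Prod.fst = μ) (hμ2 : Integrable (fun x => x ^ 2) μ) :
    Integrable (fun p : ℝ × ℝ => p.1 ^ 2) γ := by
  rw [← hγ1] at hμ2
  exact (integrable_map_measure (continuous_pow 2).aestronglyMeasurable
    measurable_fst.aemeasurable).1 hμ2

lemma integrable_sq_snd (hγ2 : γ.map Prod.snd = ν) (hν2 : Integrable (fun x => x ^ 2) ν) :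
    Integrable (fun p : ℝ × ℝ => p.2 ^ 2) γ := by
  rw [← hγ2] at hν2
  exact (integrable_map_measure (continuous_pow 2).aestronglyMeasurable
    measurable_snd.aemeasurable).1 hν2

lemma integral_sq_fst (hγ1 : γ.map Prod.fst = μ) :
    ∫ p : ℝ × ℝ, p.1 ^ 2 ∂γ = ∫ x, x ^ 2 ∂μ := by
  rw [← hγ1, integral_map measurable_fst.aemeasurable
    (continuous_pow 2).aestronglyMeasurable]

lemma integral_sq_snd (hγ2 : γ.map Prod.snd = ν) :
    ∫ p : ℝ × ℝ, p.2 ^ 2 ∂γ = ∫ y, y ^ 2 ∂ν := by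
  rw [← hγ2, integral_map measurable_snd.aemeasurable
    (continuous_pow 2).aestronglyMeasurable]

lemma integrable_mul_coupling (hγ1 : γ.map Prod.fst = μ) (hγ2 : γ.map Prod.snd = ν)
    (hμ2 : Integrable (fun x => x ^ 2) μ) (hν2 : Integrable (fun x => x ^ 2) ν) :
    Integrable (fun p : ℝ × ℝ => p.1 * p.2) γ := by
  have h1 := integrable_sq_fst μ hγ1 hμ2
  have h2 := integrable_sq_snd ν hγ2 hν2
  refine Integrable.mono' (((h1.add h2).div_const 2))
    (measurable_fst.mul measurable_snd).aestronglyMeasurable (.of_forall fun p => ?_)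
  simp only [Real.norm_eq_abs, Pi.add_apply]
  rcases abs_cases (p.1 * p.2) with ⟨h, _⟩ | ⟨h, _⟩ <;> rw [h] <;>
    nlinarith [sq_nonneg (p.1 - p.2), sq_nonneg (p.1 + p.2)]

lemma measurable_G : Measurable (fun z : (ℝ × ℝ) × (ℝ × ℝ) => phi z.1.1 z.2.1 * phi z.1.2 z.2.2) :=
  (measurable_phi2.comp (measurable_fst.fst.prodMk measurable_snd.fst)).mul
    (measurable_phi2.comp (measurable_fst.snd.prodMk measurable_snd.snd))

lemma integrable_G [SFinite γ] (hint : Integrable (fun p : ℝ × ℝ => p.1 * p.2) γ) :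
    Integrable (fun z : (ℝ × ℝ) × (ℝ × ℝ) => phi z.1.1 z.2.1 * phi z.1.2 z.2.2)
      (γ.prod ((volume : Measure ℝ).prod volume)) := by
  refine (integrable_prod_iff measurable_G.aestronglyMeasurable).2 ⟨?_, ?_⟩
  · exact .of_forall fun p => (integrable_phi p.1).mul_prod (integrable_phi p.2)
  · have heq : (fun p : ℝ × ℝ =>
        ∫ q : ℝ × ℝ, ‖phi p.1 q.1 * phi p.2 q.2‖ ∂((volume : Measure ℝ).prod volume))
        = fun p : ℝ × ℝ => |p.1| * |p.2| := by
      funext p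
      simp only [norm_mul, Real.norm_eq_abs]
      rw [integral_prod_mul (fun s => |phi p.1 s|) (fun t => |phi p.2 t|),
        integral_abs_phi, integral_abs_phi]
    rw [heq]
    have := hint.abs
    simpa [abs_mul] using this

lemma integral_mul_eq_iterated [SFinite γ] (hint : Integrable (fun p : ℝ × ℝ => p.1 * p.2) γ) :
    ∫ p : ℝ × ℝ, p.1 * p.2 ∂γ
      = ∫ q : ℝ × ℝ, (∫ p : ℝ × ℝ, phi p.1 q.1 * phi p.2 q.2 ∂γ)
          ∂((volume : Measure ℝ).prod volume) := by
  have h1 : ∀ p : ℝ × ℝ, p.1 * p.2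
      = ∫ q : ℝ × ℝ, phi p.1 q.1 * phi p.2 q.2 ∂((volume : Measure ℝ).prod volume) := by
    intro p
    rw [integral_prod_mul (fun s => phi p.1 s) (fun t => phi p.2 t), integral_phi, integral_phi]
  calc ∫ p : ℝ × ℝ, p.1 * p.2 ∂γ
      = ∫ p : ℝ × ℝ, (∫ q : ℝ × ℝ, phi p.1 q.1 * phi p.2 q.2
          ∂((volume : Measure ℝ).prod volume)) ∂γ := by
        exact integral_congr_ae (.of_forall fun p => h1 p)
    _ = ∫ q : ℝ × ℝ, (∫ p : ℝ × ℝ, phi p.1 q.1 * phi p.2 q.2 ∂γ)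
          ∂((volume : Measure ℝ).prod volume) :=
        integral_integral_swap (integrable_G hint)

lemma integral_mul_le (hγ1 : γ.map Prod.fst = μ) (hγ2 : γ.map Prod.snd = ν)
    (hμ2 : Integrable (fun x => x ^ 2) μ) (hν2 : Integrable (fun x => x ^ 2) ν) :
    ∫ p : ℝ × ℝ, p.1 * p.2 ∂γ ≤ ∫ p : ℝ × ℝ, p.1 * p.2 ∂(como μ ν) := by
  have hpγ : IsProbabilityMeasure γ := coupling_prob μ hγ1
  have hpσ : IsProbabilityMeasure (como μ ν) := coupling_prob μ (como_fst μ ν)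
  have hintγ := integrable_mul_coupling μ ν hγ1 hγ2 hμ2 hν2
  have hintσ := integrable_mul_coupling μ ν (como_fst μ ν) (como_snd μ ν) hμ2 hν2
  rw [integral_mul_eq_iterated hintγ, integral_mul_eq_iterated hintσ]
  refine integral_mono ?_ ?_ (fun q => inner_le μ ν hγ1 hγ2 q.1 q.2)
  · exact (integrable_G hintγ).swap.integral_prod_left
  · exact (integrable_G hintσ).swap.integral_prod_left

lemma integral_mul_como :
    ∫ p : ℝ × ℝ, p.1 * p.2 ∂(como μ ν)
      = ∫ τ in Ioo (0:ℝ) 1, quantile μ τ * quantile ν τ := by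
  rw [como, integral_map (aem_pair μ ν) (f := fun p : ℝ × ℝ => p.1 * p.2)
    (measurable_fst.mul measurable_snd).aestronglyMeasurable]

lemma cost_eq (hγ1 : γ.map Prod.fst = μ) (hγ2 : γ.map Prod.snd = ν)
    (hμ2 : Integrable (fun x => x ^ 2) μ) (hν2 : Integrable (fun x => x ^ 2) ν) :
    ∫ p : ℝ × ℝ, dist p.1 p.2 ^ 2 ∂γ
      = ∫ x, x ^ 2 ∂μ + ∫ y, y ^ 2 ∂ν - 2 * ∫ p : ℝ × ℝ, p.1 * p.2 ∂γ := by
  have i1 := integrable_sq_fst μ hγ1 hμ2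
  have i2 := integrable_sq_snd ν hγ2 hν2
  have im := integrable_mul_coupling μ ν hγ1 hγ2 hμ2 hν2
  have i12 : Integrable (fun p : ℝ × ℝ => p.1 ^ 2 + p.2 ^ 2) γ := i1.add i2
  have im2 : Integrable (fun p : ℝ × ℝ => 2 * (p.1 * p.2)) γ := im.const_mul 2
  have hpt : ∀ p : ℝ × ℝ, dist p.1 p.2 ^ 2 = p.1 ^ 2 + p.2 ^ 2 - 2 * (p.1 * p.2) := by
    intro p; rw [Real.dist_eq, sq_abs]; ring
  simp only [hpt]
  rw [integral_sub i12 im2, integral_add i1 i2, integral_const_mul,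
    integral_sq_fst μ hγ1, integral_sq_snd ν hγ2]

lemma cost_como :
    ∫ p : ℝ × ℝ, dist p.1 p.2 ^ 2 ∂(como μ ν)
      = ∫ τ in Ioo (0:ℝ) 1, |quantile μ τ - quantile ν τ| ^ 2 := by
  rw [como, integral_map (aem_pair μ ν) (f := fun p : ℝ × ℝ => dist p.1 p.2 ^ 2)
    ((continuous_fst.dist continuous_snd).pow 2).aestronglyMeasurable]
  simp only [Real.dist_eq]

end Fubini

/-- For probability measures on ℝ with finite second moments, the squared
2-Wasserstein distance equals the integral over τ ∈ (0,1) of the squared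
difference of the quantile functions. -/
theorem w2sq_eq_integral_quantile (μ ν : Measure ℝ)
    [IsProbabilityMeasure μ] [IsProbabilityMeasure ν]
    (hμ : Integrable (fun x => x ^ 2) μ) (hν : Integrable (fun x => x ^ 2) ν) :
    W2sq μ ν = ∫ τ in Ioo (0:ℝ) 1, |quantile μ τ - quantile ν τ| ^ 2 := by
  have hmem : (∫ τ in Ioo (0:ℝ) 1, |quantile μ τ - quantile ν τ| ^ 2)
      ∈ { c | ∃ γ : Measure (ℝ × ℝ), γ.map Prod.fst = μ ∧ γ.map Prod.snd = ν ∧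
        c = ∫ p, dist p.1 p.2 ^ 2 ∂γ } :=
    ⟨como μ ν, como_fst μ ν, como_snd μ ν, (cost_como μ ν).symm⟩
  have hbdd : BddBelow { c | ∃ γ : Measure (ℝ × ℝ), γ.map Prod.fst = μ ∧ γ.map Prod.snd = ν ∧
      c = ∫ p, dist p.1 p.2 ^ 2 ∂γ } := by
    refine ⟨0, ?_⟩
    rintro c ⟨γ, _, _, rfl⟩
    exact integral_nonneg fun p => sq_nonneg _
  have hlb : ∀ c ∈ { c | ∃ γ : Measure (ℝ × ℝ), γ.map Prod.fst = μ ∧ γ.map Prod.snd = ν ∧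
      c = ∫ p, dist p.1 p.2 ^ 2 ∂γ },
      (∫ τ in Ioo (0:ℝ) 1, |quantile μ τ - quantile ν τ| ^ 2) ≤ c := by
    rintro c ⟨γ, hγ1, hγ2, rfl⟩
    have hpσ : IsProbabilityMeasure (como μ ν) := coupling_prob μ (como_fst μ ν)
    rw [cost_eq μ ν hγ1 hγ2 hμ hν, ← cost_como μ ν,
      cost_eq μ ν (como_fst μ ν) (como_snd μ ν) hμ hν]
    have := integral_mul_le μ ν hγ1 hγ2 hμ hν
    linarith
  exact le_antisymm (csInf_le hbdd hmem) (le_csInf ⟨_, hmem⟩ hlb)
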